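/- Let α, β, κ : {0,1}^n → ℝ be coefficient families such that β_b = 0 whenever the Hamming weight |b| is odd, and |β_b| ≤ α_b for all b. Define the 2^n × 2^n matrix H := −Σ_b α_b X_b − Σ_b β_b Y_b + Σ_b κ_b Z_b. Then H is a real symmetric matrix (all entries real, H = Hᵀ) and every off-diagonal entry of H is nonpositive: H_{u,v} ≤ 0 for all u ≠ v. (That is, H is stoquastic in the computational basis.) -/

import Mathlib

open Matrix Complex

noncomputable section

/-- Single-qubit Pauli X. -/
def PX : Matrix (Fin 2) (Fin 2) ℂ := !![0, 1; 1, 0]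
/-- Single-qubit Pauli Y. -/
def PY : Matrix (Fin 2) (Fin 2) ℂ := !![0, -Complex.I; Complex.I, 0]
/-- Single-qubit Pauli Z. -/
def PZ : Matrix (Fin 2) (Fin 2) ℂ := !![1, 0; 0, -1]

/-- `P^0 = I`, `P^1 = P`. -/
def pPow (P : Matrix (Fin 2) (Fin 2) ℂ) (e : Fin 2) : Matrix (Fin 2) (Fin 2) ℂ :=
  if e = 0 then 1 else P

/-- The Pauli string `P_b`, a `2^n × 2^n` matrix indexed by bitstrings:
`(P_b)_{u,v} = ∏_i (P^{b_i})_{u_i, v_i}`. -/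
def pauliStr {n : ℕ} (P : Matrix (Fin 2) (Fin 2) ℂ) (b : Fin n → Fin 2) :
    Matrix (Fin n → Fin 2) (Fin n → Fin 2) ℂ :=
  Matrix.of fun u v => ∏ i, pPow P (b i) (u i) (v i)

/-- Hamming weight of a bitstring. -/
def hw {n : ℕ} (b : Fin n → Fin 2) : ℕ := ∑ i, (b i : ℕ)

/-- The Hamiltonian `H = -Σ_b α_b X_b - Σ_b β_b Y_b + Σ_b κ_b Z_b`. -/
def Ham {n : ℕ} (α β κ : (Fin n → Fin 2) → ℝ) :
    Matrix (Fin n → Fin 2) (Fin n → Fin 2) ℂ :=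
  (- ∑ b, (α b : ℂ) • pauliStr PX b) - (∑ b, (β b : ℂ) • pauliStr PY b)
    + ∑ b, (κ b : ℂ) • pauliStr PZ b

section Aux
variable {n : ℕ}

lemma pX_entry (e u v : Fin 2) : pPow PX e u v = if u + v = e then 1 else 0 := by
  fin_cases e <;> fin_cases u <;> fin_cases v <;> simp [pPow, PX, Matrix.one_apply] <;> decide

lemma pZ_entry (e u v : Fin 2) :
    pPow PZ e u v = if u = v then (-1 : ℂ) ^ ((e:ℕ) * (u:ℕ)) else 0 := by
  fin_cases e <;> fin_cases u <;> fin_cases v <;> simp [pPow, PZ, Matrix.one_apply]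

lemma pY_entry (e u v : Fin 2) :
    pPow PY e u v = (if u + v = e then 1 else 0) * Complex.I ^ (e:ℕ) * (-1:ℂ) ^ ((e:ℕ)*(v:ℕ)) := by
  fin_cases e <;> fin_cases u <;> fin_cases v <;> simp [pPow, PY, Matrix.one_apply] <;> decide

variable {n : ℕ}

lemma pauliX_apply (b u v : Fin n → Fin 2) :
    pauliStr PX b u v = if u + v = b then 1 else 0 := by
  simp only [pauliStr, of_apply, pX_entry, Finset.prod_boole]
  congr 1
  simp [funext_iff, eq_iff_iff]

lemma pauliZ_apply (b u v : Fin n → Fin 2) :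
    pauliStr PZ b u v = if u = v then (-1:ℂ) ^ (∑ i, (b i : ℕ) * (u i : ℕ)) else 0 := by
  simp only [pauliStr, of_apply, pZ_entry]
  by_cases h : u = v
  · subst h; simp [Finset.prod_pow_eq_pow_sum]
  · simp only [h, if_false]
    obtain ⟨i, hi⟩ := Function.ne_iff.mp h
    exact Finset.prod_eq_zero (Finset.mem_univ i) (by simp [hi])

lemma pauliY_apply (b u v : Fin n → Fin 2) :
    pauliStr PY b u v = (if u + v = b then 1 else 0) * Complex.I ^ hw b
      * (-1:ℂ) ^ (∑ i, (b i : ℕ) * (v i : ℕ)) := by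
  simp only [pauliStr, of_apply, pY_entry, Finset.prod_mul_distrib, Finset.prod_boole,
    Finset.prod_pow_eq_pow_sum, hw]
  congr 1
  congr 1
  congr 1
  simp [funext_iff, eq_iff_iff]

lemma Ham_apply (α β κ : (Fin n → Fin 2) → ℝ) (u v : Fin n → Fin 2) :
    Ham α β κ u v = -(α (u+v) : ℂ)
      - (β (u+v) : ℂ) * Complex.I ^ hw (u+v) * (-1:ℂ) ^ (∑ i, ((u+v) i : ℕ) * (v i : ℕ))
      + (if u = v then ∑ b, (κ b : ℂ) * (-1:ℂ) ^ (∑ i, (b i : ℕ) * (u i : ℕ)) else 0) := by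
  simp only [Ham, Matrix.add_apply, Matrix.sub_apply, Matrix.neg_apply, Matrix.sum_apply,
    Matrix.smul_apply, pauliX_apply, pauliY_apply, pauliZ_apply, smul_eq_mul,
    mul_ite, mul_one, mul_zero, ite_mul, zero_mul, Finset.sum_ite_eq, Finset.mem_univ, if_true]
  rw [Finset.sum_ite_irrel]
  simp [mul_assoc]

-- pointwise parity fact
lemma bit_fact (x y : Fin 2) :
    ((x + y : Fin 2) : ℕ) * (x : ℕ) + ((x + y : Fin 2) : ℕ) * (y : ℕ) = ((x + y : Fin 2) : ℕ) := by
  fin_cases x <;> fin_cases y <;> rfl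

lemma dot_add_dot (u v : Fin n → Fin 2) :
    (∑ i, ((u+v) i : ℕ) * (u i : ℕ)) + (∑ i, ((u+v) i : ℕ) * (v i : ℕ)) = hw (u+v) := by
  rw [← Finset.sum_add_distrib]
  exact Finset.sum_congr rfl fun i _ => bit_fact (u i) (v i)

/-- real value of the Y contribution -/
def yterm {n : ℕ} (β : (Fin n → Fin 2) → ℝ) (u v : Fin n → Fin 2) : ℝ :=
  if Even (hw (u+v)) then
    β (u+v) * (-1:ℝ) ^ (hw (u+v) / 2 + ∑ i, ((u+v) i : ℕ) * (v i : ℕ)) else 0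

lemma yterm_eq (β : (Fin n → Fin 2) → ℝ) (hβodd : ∀ b, Odd (hw b) → β b = 0)
    (u v : Fin n → Fin 2) :
    (β (u+v) : ℂ) * Complex.I ^ hw (u+v) * (-1:ℂ) ^ (∑ i, ((u+v) i : ℕ) * (v i : ℕ))
      = (yterm β u v : ℂ) := by
  by_cases h : Even (hw (u+v))
  · obtain ⟨k, hk⟩ := h
    have h2 : hw (u+v) / 2 = k := by omega
    rw [yterm, if_pos ⟨k, hk⟩, h2, hk]
    rw [show Complex.I ^ (k + k) = (-1:ℂ)^k by
      rw [pow_add, ← mul_pow, Complex.I_mul_I]]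
    rw [pow_add]

    push_cast
    ring
  · rw [hβodd _ (Nat.not_even_iff_odd.mp h), yterm, if_neg h]
    simp

lemma yterm_abs_le (β : (Fin n → Fin 2) → ℝ) (u v : Fin n → Fin 2) :
    |yterm β u v| ≤ |β (u+v)| := by
  rw [yterm]
  split
  · rw [abs_mul, _root_.abs_pow, abs_neg, abs_one, one_pow, mul_one]
  · simp

lemma neg_one_pow_congr_aux {m1 m2 : ℕ} (h : Even m1 ↔ Even m2) : (-1:ℝ)^m1 = (-1:ℝ)^m2 := by
  by_cases h1 : Even m1
  · rw [h1.neg_one_pow, (h.mp h1).neg_one_pow]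
  · rw [(Nat.not_even_iff_odd.mp h1).neg_one_pow,
      (Nat.not_even_iff_odd.mp (fun he => h1 (h.mpr he))).neg_one_pow]

lemma yterm_symm (β : (Fin n → Fin 2) → ℝ) (u v : Fin n → Fin 2) :
    yterm β u v = yterm β v u := by
  rw [yterm, yterm, add_comm v u]
  split
  · next h =>
    congr 1
    apply neg_one_pow_congr_aux
    have hd := dot_add_dot u v
    have hpar : Even ((∑ i, ((u+v) i : ℕ) * (u i : ℕ)) + ∑ i, ((u+v) i : ℕ) * (v i : ℕ)) := by
      rw [hd]; exact h
    have h2 := Nat.even_add.mp hpar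
    rw [Nat.even_add, Nat.even_add]
    tauto
  · rfl

end Aux

/-- with `β_b = 0` for odd Hamming weight and `|β_b| ≤ α_b`, the Hamiltonian
`H = -Σ α_b X_b - Σ β_b Y_b + Σ κ_b Z_b` is real symmetric with nonpositive
off-diagonal entries (stoquastic in the computational basis). -/
theorem stoquastic_of_coeffs (n : ℕ) (hn : 1 ≤ n) (α β κ : (Fin n → Fin 2) → ℝ)
    (hβodd : ∀ b, Odd (hw b) → β b = 0)
    (hβα : ∀ b, |β b| ≤ α b) :
    (∀ u v, (Ham α β κ u v).im = 0) ∧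
    (Ham α β κ = (Ham α β κ)ᵀ) ∧
    (∀ u v, u ≠ v → (Ham α β κ u v).re ≤ 0) := by
  have key : ∀ u v, Ham α β κ u v =
      ((-(α (u+v)) - yterm β u v
        + (if u = v then ∑ b, κ b * (-1:ℝ) ^ (∑ i, (b i : ℕ) * (u i : ℕ)) else 0) : ℝ) : ℂ) := by
    intro u v
    rw [Ham_apply, yterm_eq β hβodd]
    push_cast [apply_ite (Complex.ofReal)]
    rfl
  refine ⟨fun u v => by rw [key]; exact Complex.ofReal_im _, ?_, ?_⟩
  · ext u v
    rw [transpose_apply, key u v, key v u, add_comm v u, yterm_symm β v u]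
    have hif : (if u = v then ∑ b, κ b * (-1:ℝ) ^ (∑ i, (b i : ℕ) * (u i : ℕ)) else 0)
        = (if v = u then ∑ b, κ b * (-1:ℝ) ^ (∑ i, (b i : ℕ) * (v i : ℕ)) else 0) := by
      rcases eq_or_ne u v with h | h
      · subst h; rfl
      · rw [if_neg h, if_neg (Ne.symm h)]
    rw [hif]
  · intro u v huv
    rw [key, if_neg huv, add_zero, Complex.ofReal_re]
    have h1 := yterm_abs_le β u v
    have h2 := hβα (u + v)
    linarith [neg_abs_le (yterm β u v), le_abs_self (β (u+v)), neg_abs_le (β (u+v))]
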